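/- For all n ≥ 3, g = ((2n−2)/(2n−3))·f₁ + (c(n−2)/(2n−3))·𝟙 and h = ((2n−2)/(2n−3))·f₁ − (c(2n−2)/((2n−1)(2n−3)))·𝟙, where 𝟙 is the constant all-ones function on the set of perfect matchings. -/

import Mathlib

set_option linter.unusedVariables false

open scoped Classical

noncomputable section

/-- The derangement graph on `Sym(n)`: permutations adjacent iff they disagree everywhere
(equivalently, `σ τ⁻¹` is a derangement). -/
def derangementGraph (n : ℕ) : SimpleGraph (Equiv.Perm (Fin n)) where
  Adj σ τ := σ ≠ τ ∧ ∀ i, σ i ≠ τ i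
  symm := ⟨fun σ τ h => ⟨h.1.symm, fun i => (h.2 i).symm⟩⟩
  loopless := ⟨fun σ h => h.1 rfl⟩

/-- The star `A_{a→b}` in the derangement graph: permutations sending `a` to `b`. -/
def derStar (n : ℕ) (a b : Fin n) : Set (Equiv.Perm (Fin n)) := {σ | σ a = b}

/-- Perfect matchings of `K_{2n}`, encoded as fixed-point-free involutions of `Fin (2n)`. -/
abbrev PMatching (n : ℕ) :=
  {f : Equiv.Perm (Fin (2 * n)) // (∀ x, f (f x) = x) ∧ ∀ x, f x ≠ x}

/-- The perfect matching graph `M_n`: matchings adjacent iff they share no edge. -/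
def matchingGraph (n : ℕ) : SimpleGraph (PMatching n) where
  Adj m m' := m ≠ m' ∧ ∀ x, m.1 x ≠ m'.1 x
  symm := ⟨fun m m' h => ⟨h.1.symm, fun x => (h.2 x).symm⟩⟩
  loopless := ⟨fun m h => h.1 rfl⟩

/-- The star `S_e` of a (non-diagonal) pair `e : Sym2 (Fin (2n))`:
all perfect matchings containing the edge `e`. -/
def pmStar (n : ℕ) (e : Sym2 (Fin (2 * n))) : Set (PMatching n) :=
  {m | ∃ x, e = s(x, m.1 x)}

/-- A set of vertices is independent if it spans no edges. -/
def IsIndepSet {V : Type*} (G : SimpleGraph V) (s : Set V) : Prop :=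
  ∀ a ∈ s, ∀ b ∈ s, ¬ G.Adj a b

/-- The independence number of a finite graph. -/
noncomputable def indepNum {V : Type*} [Fintype V] (G : SimpleGraph V) : ℕ :=
  sSup {k | ∃ s : Set V, IsIndepSet G s ∧ s.ncard = k}

/-- `edIn G s` is the number of edges of `G` with both endpoints in `s`. -/
noncomputable def edIn {V : Type*} (G : SimpleGraph V) (s : Set V) : ℕ :=
  Nat.card {e : Sym2 V // e ∈ G.edgeSet ∧ ∀ v ∈ e, v ∈ s}

/-- Probability that the random spanning subgraph `G_p` of `G` (each edge of `G` kept
independently with probability `p`) satisfies the predicate `P`. -/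
noncomputable def prRandSub {V : Type*} [Fintype V] (G : SimpleGraph V) (p : ℝ)
    (P : SimpleGraph V → Prop) : ℝ :=
  ∑ S ∈ G.edgeFinset.powerset,
    if P (SimpleGraph.fromEdgeSet (S : Set (Sym2 V))) then
      p ^ S.card * (1 - p) ^ (G.edgeFinset.card - S.card) else 0

/-- The edges of `K_{2n}`: non-diagonal elements of `Sym2 (Fin (2n))`. -/
noncomputable def pmEdges (n : ℕ) : Finset (Sym2 (Fin (2 * n))) :=
  Finset.univ.filter fun e => ¬e.IsDiag

/-- Expectation of a function on perfect matchings: `E[φ] = (1/(2n-1)!!) Σ_P φ(P)`. -/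
noncomputable def pmExp (n : ℕ) (φ : PMatching n → ℝ) : ℝ :=
  (1 / (Nat.doubleFactorial (2 * n - 1) : ℝ)) * ∑ m, φ m

/-- The inner product `⟨f,g⟩ = (1/(2n-1)!!) Σ_P f(P)g(P)` on functions on matchings. -/
noncomputable def pmInner (n : ℕ) (f g : PMatching n → ℝ) : ℝ :=
  (1 / (Nat.doubleFactorial (2 * n - 1) : ℝ)) * ∑ m, f m * g m

/-- `U`: the linear span of the indicator vectors of the stars of `M_n`. -/
noncomputable def starSpan (n : ℕ) : Submodule ℝ (PMatching n → ℝ) :=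
  Submodule.span ℝ
    {f | ∃ e : Sym2 (Fin (2 * n)), ¬e.IsDiag ∧ f = Set.indicator (pmStar n e) 1}

/-- `a_e = |A ∩ S_e|/(2n-3)!!`. -/
noncomputable def aCoe (n : ℕ) (A : Set (PMatching n)) (e : Sym2 (Fin (2 * n))) : ℝ :=
  ((A ∩ pmStar n e).ncard : ℝ) / (Nat.doubleFactorial (2 * n - 3) : ℝ)

/-- `b_e = a_e - c/(2n-1)`. -/
noncomputable def bCoe (n : ℕ) (A : Set (PMatching n)) (c : ℝ)
    (e : Sym2 (Fin (2 * n))) : ℝ :=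
  aCoe n A e - c / (2 * (n : ℝ) - 1)

/-- `g = Σ_e a_e · 1_{S_e}`. -/
noncomputable def gFun (n : ℕ) (A : Set (PMatching n)) : PMatching n → ℝ :=
  fun m => ∑ e ∈ pmEdges n, aCoe n A e * Set.indicator (pmStar n e) 1 m

/-- `h = Σ_e b_e · 1_{S_e}`. -/
noncomputable def hFun (n : ℕ) (A : Set (PMatching n)) (c : ℝ) : PMatching n → ℝ :=
  fun m => ∑ e ∈ pmEdges n, bCoe n A c e * Set.indicator (pmStar n e) 1 m

abbrev FPF (V : Type*) := {f : Equiv.Perm V // (∀ x, f (f x) = x) ∧ ∀ x, f x ≠ x}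

variable {V : Type*} [DecidableEq V]

omit [DecidableEq V] in
lemma fpf_eq_iff (m : FPF V) {x y : V} : m.1 x = y ↔ x = m.1 y := by
  constructor
  · rintro rfl; exact (m.2.1 x).symm
  · rintro rfl; exact m.2.1 y

lemma swap_pred (a b : V) : ∀ x : V, ¬(x ≠ a ∧ x ≠ b) ↔
    ¬(Equiv.swap a b x ≠ a ∧ Equiv.swap a b x ≠ b) := by
  intro x
  simp only [not_and_or, not_not]
  have h1 : Equiv.swap a b x = a ↔ x = b := by
    rw [Equiv.apply_eq_iff_eq_symm_apply, Equiv.symm_swap, Equiv.swap_apply_left]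
  have h2 : Equiv.swap a b x = b ↔ x = a := by
    rw [Equiv.apply_eq_iff_eq_symm_apply, Equiv.symm_swap, Equiv.swap_apply_right]
  rw [h1, h2, or_comm]

lemma fpf_pred (m : FPF V) {a b : V} (hm : m.1 a = b) :
    ∀ x : V, (x ≠ a ∧ x ≠ b) ↔ (m.1 x ≠ a ∧ m.1 x ≠ b) := by
  intro x
  have hba : m.1 b = a := by rw [← hm, m.2.1]
  have h1 : m.1 x = a ↔ x = b := by rw [fpf_eq_iff m, hm]
  have h2 : m.1 x = b ↔ x = a := by rw [fpf_eq_iff m, hba]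
  rw [Ne, Ne, Ne, Ne, h1, h2]; tauto

/-- Restriction equivalence. -/
def fpfRestrict (a b : V) (hab : a ≠ b) :
    {m : FPF V // m.1 a = b} ≃ FPF {x : V // x ≠ a ∧ x ≠ b} where
  toFun m :=
    ⟨Equiv.Perm.subtypePerm m.1.1 (fun x => (fpf_pred m.1 m.2 x).symm),
      fun x => Subtype.ext (m.1.2.1 x.1),
      fun x hx => m.1.2.2 x.1 (congrArg Subtype.val hx)⟩
  invFun f := by
    set sw := (Equiv.swap a b).subtypePerm (p := fun y => ¬(y ≠ a ∧ y ≠ b)) (fun x => (swap_pred a b x).symm) with hsw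
    set σ := Equiv.Perm.subtypeCongr f.1 sw with hσ
    have happ : ∀ (x : V) (h : x ≠ a ∧ x ≠ b), σ x = (f.1 ⟨x, h⟩ : {x : V // x ≠ a ∧ x ≠ b}).1 :=
      fun x h => Equiv.Perm.subtypeCongr.left_apply (p := fun x => x ≠ a ∧ x ≠ b) _ _ h
    have hpa : ¬(a ≠ a ∧ a ≠ b) := fun h => h.1 rfl
    have hpb : ¬(b ≠ a ∧ b ≠ b) := fun h => h.2 rfl
    have hσa : σ a = b := by
      rw [hσ, Equiv.Perm.subtypeCongr.right_apply (p := fun x => x ≠ a ∧ x ≠ b) _ _ hpa]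
      simp [hsw, Equiv.Perm.subtypePerm_apply]
    have hσb : σ b = a := by
      rw [hσ, Equiv.Perm.subtypeCongr.right_apply (p := fun x => x ≠ a ∧ x ≠ b) _ _ hpb]
      simp [hsw, Equiv.Perm.subtypePerm_apply]
    refine ⟨⟨σ, ?_, ?_⟩, hσa⟩
    · intro x
      rcases Classical.em (x ≠ a ∧ x ≠ b) with h | h
      · rw [happ x h, happ _ (f.1 ⟨x, h⟩).2]
        have := congrArg Subtype.val (f.2.1 ⟨x, h⟩)
        simpa using this
      · rcases not_and_or.1 h with h' | h' <;> rw [not_not] at h'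
        · rw [h', hσa, hσb]
        · rw [h', hσb, hσa]
    · intro x
      rcases Classical.em (x ≠ a ∧ x ≠ b) with h | h
      · rw [happ x h]
        intro hx
        exact f.2.2 ⟨x, h⟩ (Subtype.ext hx)
      · rcases not_and_or.1 h with h' | h' <;> rw [not_not] at h'
        · rw [h', hσa]; exact hab.symm
        · rw [h', hσb]; exact hab
  left_inv := by
    intro m
    apply Subtype.ext; apply Subtype.ext; apply Equiv.ext
    intro x
    rcases Classical.em (x ≠ a ∧ x ≠ b) with h | h
    · rw [Equiv.Perm.subtypeCongr.left_apply (p := fun x => x ≠ a ∧ x ≠ b) _ _ h]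
      rfl
    · rw [Equiv.Perm.subtypeCongr.right_apply (p := fun x => x ≠ a ∧ x ≠ b) _ _ h]
      have hba : m.1.1 b = a := ((fpf_eq_iff m.1).1 m.2).symm
      simp only [Equiv.Perm.subtypePerm_apply]
      rcases not_and_or.1 h with h' | h' <;> rw [not_not] at h' <;> rw [h']
      · rw [Equiv.swap_apply_left]; exact m.2.symm
      · rw [Equiv.swap_apply_right]; exact hba.symm
  right_inv := by
    intro f
    apply Subtype.ext; apply Equiv.ext
    intro x
    apply Subtype.ext
    have : (⟨x.1, x.2⟩ : {x : V // x ≠ a ∧ x ≠ b}) = x := Subtype.ext rfl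
    simp only [Equiv.Perm.subtypePerm_apply]
    rw [Equiv.Perm.subtypeCongr.left_apply (p := fun x => x ≠ a ∧ x ≠ b) _ _ x.2, this]

lemma card_compl_pair {V : Type*} [Fintype V] [DecidableEq V] {a b : V} (hab : a ≠ b) :
    Fintype.card {x : V // x ≠ a ∧ x ≠ b} = Fintype.card V - 2 := by
  rw [Fintype.card_subtype]
  have h : Finset.filter (fun x => x ≠ a ∧ x ≠ b) Finset.univ = Finset.univ \ {a, b} := by
    ext x; simp [not_or]
  rw [h, Finset.card_sdiff_of_subset (by simp), Finset.card_univ, Finset.card_pair hab]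

theorem cardFPF : ∀ (k : ℕ) (V : Type*) [Fintype V] [DecidableEq V],
    Fintype.card V = 2 * k → Nat.card (FPF V) = Nat.doubleFactorial (2 * k - 1) := by
  intro k
  induction k with
  | zero =>
    intro V _ _ h
    have hE : IsEmpty V := Fintype.card_eq_zero_iff.1 h
    have h1 : Nonempty (FPF V) := ⟨⟨1, fun x => isEmptyElim x, fun x => isEmptyElim x⟩⟩
    have h2 : Subsingleton (FPF V) :=
      ⟨fun f g => Subtype.ext (Equiv.ext fun x => isEmptyElim x)⟩
    obtain ⟨f⟩ := h1
    rw [Nat.card_eq_fintype_card]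
    exact Fintype.card_eq_one_of_forall_eq (fun g => Subsingleton.elim g f)
  | succ k ih =>
    intro V _ _ h
    have hpos : 0 < Fintype.card V := by omega
    obtain ⟨v⟩ := Fintype.card_pos_iff.1 hpos
    set F : FPF V → {w : V // w ≠ v} := fun m => ⟨m.1 v, m.2.2 v⟩ with hF
    have e1 := (Equiv.sigmaFiberEquiv F).symm
    rw [Nat.card_congr e1, Nat.card_eq_fintype_card, Fintype.card_sigma]
    have hfib : ∀ w : {w : V // w ≠ v}, Fintype.card {m : FPF V // F m = w}
        = Nat.doubleFactorial (2 * k - 1) := by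
      intro w
      rw [← Nat.card_eq_fintype_card]
      have e2 : {m : FPF V // F m = w} ≃ {m : FPF V // m.1 v = w.1} :=
        Equiv.subtypeEquivRight (fun m => by rw [hF]; exact Subtype.ext_iff)
      rw [Nat.card_congr e2, Nat.card_congr (fpfRestrict v w.1 (Ne.symm w.2))]
      exact ih _ (by rw [card_compl_pair (Ne.symm w.2), h]; omega)
    rw [Finset.sum_congr rfl (fun w _ => hfib w), Finset.sum_const, Finset.card_univ]
    have hcard : Fintype.card {w : V // w ≠ v} = 2 * k + 1 := by
      rw [Fintype.card_subtype_compl (· = v), Fintype.card_subtype_eq, h]; omega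
    rw [hcard, smul_eq_mul]
    rcases k with _ | j
    · simp [Nat.doubleFactorial]
    · have h1 : 2 * (j + 1 + 1) - 1 = (2 * (j + 1) - 1) + 2 := by omega
      rw [h1, Nat.doubleFactorial_add_two]
      have h2 : 2 * (j + 1) - 1 + 2 = 2 * (j + 1) + 1 := by omega
      rw [h2]

lemma card_fpf_one {V : Type*} [Fintype V] [DecidableEq V] {k : ℕ}
    (hV : Fintype.card V = 2 * k) {a b : V} (hab : a ≠ b) :
    Nat.card {m : FPF V // m.1 a = b} = Nat.doubleFactorial (2 * k - 3) := by
  have hk : 1 ≤ k := by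
    have : 1 < Fintype.card V := Fintype.one_lt_card_iff_nontrivial.2 ⟨a, b, hab⟩
    omega
  rw [Nat.card_congr (fpfRestrict a b hab),
    cardFPF (k - 1) _ (by rw [card_compl_pair hab, hV]; omega)]
  congr 1
  omega

lemma card_fpf_two {V : Type*} [Fintype V] [DecidableEq V] {k : ℕ}
    (hV : Fintype.card V = 2 * k) {a b x y : V} (hab : a ≠ b) (hxy : x ≠ y)
    (hxa : x ≠ a) (hxb : x ≠ b) (hya : y ≠ a) (hyb : y ≠ b) :
    Nat.card {m : FPF V // m.1 a = b ∧ m.1 x = y} = Nat.doubleFactorial (2 * k - 5) := by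
  have e1 : {m' : {m : FPF V // m.1 a = b} // m'.1.1 x = y} ≃
      {m : FPF V // m.1 a = b ∧ m.1 x = y} :=
    Equiv.subtypeSubtypeEquivSubtypeInter (fun m : FPF V => m.1 a = b) (fun m => m.1 x = y)
  rw [← Nat.card_congr e1]
  have e2 : {m' : {m : FPF V // m.1 a = b} // m'.1.1 x = y} ≃
      {f : FPF {z : V // z ≠ a ∧ z ≠ b} // f.1 ⟨x, ⟨hxa, hxb⟩⟩ = ⟨y, ⟨hya, hyb⟩⟩} := by
    refine Equiv.subtypeEquiv (fpfRestrict a b hab) (fun m' => ?_)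
    rw [Subtype.ext_iff]
    rfl
  rw [Nat.card_congr e2,
    card_fpf_one (k := k - 1) (by rw [card_compl_pair hab, hV]; omega)
      (fun h => hxy (congrArg Subtype.val h))]
  congr 1
  omega






variable {n : ℕ}

lemma mem_pmStar (m : PMatching n) (a b : Fin (2*n)) :
    m ∈ pmStar n s(a, b) ↔ m.1 a = b := by
  constructor
  · rintro ⟨x, hx⟩
    rcases Sym2.eq_iff.1 hx with ⟨rfl, rfl⟩ | ⟨ha, rfl⟩
    · rfl
    · rw [ha, m.2.1]
  · intro h; exact ⟨a, by rw [h]⟩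

def edgeF (m : PMatching n) : Finset (Sym2 (Fin (2*n))) :=
  Finset.image (fun x => s(x, m.1 x)) Finset.univ

lemma edge_eq_iff (m : PMatching n) (x y : Fin (2*n)) :
    s(x, m.1 x) = s(y, m.1 y) ↔ y = x ∨ y = m.1 x := by
  rw [Sym2.eq_iff]
  constructor
  · rintro (⟨h1, h2⟩ | ⟨h1, h2⟩)
    · exact Or.inl h1.symm
    · exact Or.inr h2.symm
  · rintro (rfl | rfl)
    · exact Or.inl ⟨rfl, rfl⟩
    · exact Or.inr ⟨(m.2.1 x).symm, rfl⟩

lemma mem_edgeF (m : PMatching n) (e : Sym2 (Fin (2*n))) :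
    e ∈ edgeF m ↔ m ∈ pmStar n e := by
  simp only [edgeF, Finset.mem_image, Finset.mem_univ, true_and, pmStar, Set.mem_setOf_eq]
  exact ⟨fun ⟨x, h⟩ => ⟨x, h.symm⟩, fun ⟨x, h⟩ => ⟨x, h.symm⟩⟩

lemma edgeF_subset (m : PMatching n) : edgeF m ⊆ pmEdges n := by
  intro e he
  simp only [edgeF, Finset.mem_image] at he
  obtain ⟨x, _, rfl⟩ := he
  simp only [pmEdges, Finset.mem_filter, Finset.mem_univ, true_and, Sym2.isDiag_iff_proj_eq]
  exact fun h => m.2.2 x h.symm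

lemma card_edgeF (m : PMatching n) : (edgeF m).card = n := by
  have h := Finset.card_eq_sum_card_image (fun x => s(x, m.1 x)) (Finset.univ : Finset (Fin (2*n)))
  rw [Finset.card_univ, Fintype.card_fin] at h
  have hfib : ∀ e ∈ Finset.image (fun x => s(x, m.1 x)) Finset.univ,
      (Finset.filter (fun y => s(y, m.1 y) = e) Finset.univ).card = 2 := by
    intro e he
    obtain ⟨x, _, rfl⟩ := Finset.mem_image.1 he
    have : Finset.filter (fun y => s(y, m.1 y) = s(x, m.1 x)) Finset.univ = {x, m.1 x} := by
      ext y
      simp only [Finset.mem_filter, Finset.mem_univ, true_and, Finset.mem_insert,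
        Finset.mem_singleton]
      rw [edge_eq_iff]
      constructor
      · rintro (rfl | h)
        · exact Or.inl rfl
        · rw [h]; exact Or.inr (m.2.1 y).symm
      · rintro (rfl | rfl)
        · exact Or.inl rfl
        · exact Or.inr (m.2.1 x).symm
    rw [this, Finset.card_pair (fun h => m.2.2 x h.symm)]
  rw [Finset.sum_congr rfl hfib, Finset.sum_const, smul_eq_mul] at h
  unfold edgeF
  omega

lemma sum_star_indicator (m : PMatching n) (w : Sym2 (Fin (2*n)) → ℝ) :
    ∑ e ∈ pmEdges n, w e * Set.indicator (pmStar n e) 1 m = ∑ e ∈ edgeF m, w e := by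
  have h1 : ∀ e, w e * Set.indicator (pmStar n e) 1 m = if e ∈ edgeF m then w e else 0 := by
    intro e
    rw [Set.indicator_apply]
    by_cases h : m ∈ pmStar n e
    · rw [if_pos h, if_pos ((mem_edgeF m e).2 h), Pi.one_apply, mul_one]
    · rw [if_neg h, if_neg (fun hh => h ((mem_edgeF m e).1 hh)), mul_zero]
  rw [Finset.sum_congr rfl (fun e _ => h1 e), Finset.sum_ite_mem,
    Finset.inter_eq_right.2 (edgeF_subset m)]

lemma ncard_star (a b : Fin (2*n)) (hab : a ≠ b) :
    (pmStar n s(a, b)).ncard = Nat.doubleFactorial (2*n - 3) := by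
  rw [← Nat.card_coe_set_eq]
  rw [Nat.card_congr (Equiv.subtypeEquivRight fun m => mem_pmStar m a b)]
  exact card_fpf_one (Fintype.card_fin _) hab

lemma ncard_star_inter {a b x y : Fin (2*n)} (hab : a ≠ b) (hxy : x ≠ y)
    (hxa : x ≠ a) (hxb : x ≠ b) (hya : y ≠ a) (hyb : y ≠ b) :
    (pmStar n s(a, b) ∩ pmStar n s(x, y)).ncard = Nat.doubleFactorial (2*n - 5) := by
  rw [← Nat.card_coe_set_eq]
  have e : ↥(pmStar n s(a, b) ∩ pmStar n s(x, y)) ≃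
      {m : PMatching n // m.1 a = b ∧ m.1 x = y} :=
    Equiv.subtypeEquivRight fun m => by
      rw [Set.mem_inter_iff, mem_pmStar, mem_pmStar]
  rw [Nat.card_congr e]
  exact card_fpf_two (Fintype.card_fin _) hab hxy hxa hxb hya hyb

lemma star_inter_empty {a b y : Fin (2*n)} (hby : b ≠ y) :
    pmStar n s(a, b) ∩ pmStar n s(a, y) = ∅ := by
  ext m
  simp only [Set.mem_inter_iff, mem_pmStar, Set.mem_empty_iff_false, iff_false, not_and]
  rintro rfl
  exact fun h => hby h

lemma star_self_inter (e : Sym2 (Fin (2*n))) : pmStar n e ∩ pmStar n e = pmStar n e :=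
  Set.inter_self _

lemma sum_indicator_eq_ncard {α : Type*} [Fintype α] (S : Set α) :
    ∑ m' : α, Set.indicator S (1 : α → ℝ) m' = (S.ncard : ℝ) := by
  rw [Set.ncard_eq_toFinset_card' S]
  have h : ∀ m' : α, Set.indicator S (1 : α → ℝ) m' = if m' ∈ S then 1 else 0 := fun m' => by
    rw [Set.indicator_apply]; split <;> simp
  rw [Finset.sum_congr rfl (fun m' _ => h m'), Finset.sum_boole]
  congr 2
  ext a
  simp [Set.mem_toFinset]

lemma sum_ind_mul_ind {α : Type*} [Fintype α] (S T : Set α) :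
    ∑ m' : α, Set.indicator S (1 : α → ℝ) m' * Set.indicator T (1 : α → ℝ) m'
      = ((S ∩ T).ncard : ℝ) := by
  rw [← sum_indicator_eq_ncard (S ∩ T)]
  refine Finset.sum_congr rfl (fun m' _ => ?_)
  by_cases h1 : m' ∈ S <;> by_cases h2 : m' ∈ T <;>
    simp [Set.indicator_apply, h1, h2, Set.mem_inter_iff]

lemma D3_eq (hn : 3 ≤ n) : (Nat.doubleFactorial (2*n-3) : ℝ)
    = (2*(n:ℝ)-3) * (Nat.doubleFactorial (2*n-5) : ℝ) := by
  have h : 2*n-3 = (2*n-5)+2 := by omega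
  rw [h, Nat.doubleFactorial_add_two]
  have h5 : ((2*n-5 : ℕ) : ℝ) = 2*(n:ℝ)-5 := by
    have h' : (5:ℕ) ≤ 2*n := by omega
    push_cast [h']
    ring
  push_cast
  rw [h5]
  ring

lemma sum_inter_card (hn : 3 ≤ n) {a b : Fin (2*n)} (hab : a ≠ b) (m : PMatching n) :
    (∑ e ∈ edgeF m, ((pmStar n s(a,b) ∩ pmStar n e).ncard : ℝ))
      = if m.1 a = b then
          (Nat.doubleFactorial (2*n-3) : ℝ) + ((n:ℝ)-1) * (Nat.doubleFactorial (2*n-5) : ℝ)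
        else ((n:ℝ)-2) * (Nat.doubleFactorial (2*n-5) : ℝ) := by
  have hmab : ∀ x : Fin (2*n), m.1 x = b ↔ x = m.1 b := fun x => fpf_eq_iff m
  by_cases hm : m.1 a = b
  · rw [if_pos hm]
    have hmb : m.1 b = a := ((fpf_eq_iff m).1 hm).symm
    have hf : s(a, b) ∈ edgeF m := (mem_edgeF m _).2 ((mem_pmStar m a b).2 hm)
    rw [← Finset.add_sum_erase _ _ hf, star_self_inter, ncard_star a b hab]
    congr 1
    have hval : ∀ e ∈ (edgeF m).erase s(a, b),
        ((pmStar n s(a,b) ∩ pmStar n e).ncard : ℝ)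
          = (Nat.doubleFactorial (2*n-5) : ℝ) := by
      intro e he
      obtain ⟨he1, he2⟩ := Finset.mem_erase.1 he
      obtain ⟨x, _, rfl⟩ := Finset.mem_image.1 he2
      have hxa : x ≠ a := fun h => he1 (by rw [h, hm])
      have hxb : x ≠ b := fun h => he1 (by rw [h, hmb, Sym2.eq_swap])
      have hmxa : m.1 x ≠ a := fun h => hxb (by rw [← m.2.1 x, h]; exact hm)
      have hmxb : m.1 x ≠ b := fun h => hxa (by rw [← m.2.1 x, h]; exact hmb)
      rw [ncard_star_inter hab (fun h => m.2.2 x h.symm) hxa hxb hmxa hmxb]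
    rw [Finset.sum_congr rfl hval, Finset.sum_const,
      Finset.card_erase_of_mem hf, card_edgeF, nsmul_eq_mul]
    have : ((n - 1 : ℕ) : ℝ) = (n:ℝ) - 1 := by
      have h' : (1:ℕ) ≤ n := by omega
      push_cast [h']; ring
    rw [this]
  · rw [if_neg hm]
    have hmb : m.1 b ≠ a := fun h => hm (by rw [← h, m.2.1])
    set e₁ := s(a, m.1 a) with he₁
    set e₂ := s(b, m.1 b) with he₂
    have h1 : e₁ ∈ edgeF m := (mem_edgeF m _).2 ⟨a, rfl⟩
    have h2 : e₂ ∈ edgeF m := (mem_edgeF m _).2 ⟨b, rfl⟩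
    have h12 : e₂ ≠ e₁ := by
      rw [he₁, he₂]
      intro h
      rcases (edge_eq_iff m b a).1 h with h' | h'
      · exact hab h'
      · exact hm (by rw [h', m.2.1])
    have h2' : e₂ ∈ (edgeF m).erase e₁ := Finset.mem_erase.2 ⟨h12, h2⟩
    rw [← Finset.add_sum_erase _ _ h1, ← Finset.add_sum_erase _ _ h2']
    have hz1 : ((pmStar n s(a,b) ∩ pmStar n e₁).ncard : ℝ) = 0 := by
      rw [he₁, star_inter_empty (fun h => hm h.symm), Set.ncard_empty]
      norm_num
    have hz2 : ((pmStar n s(a,b) ∩ pmStar n e₂).ncard : ℝ) = 0 := by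
      rw [he₂, Sym2.eq_swap (a := a) (b := b), star_inter_empty (fun h => hmb h.symm),
        Set.ncard_empty]
      norm_num
    rw [hz1, hz2, zero_add, zero_add]
    have hval : ∀ e ∈ ((edgeF m).erase e₁).erase e₂,
        ((pmStar n s(a,b) ∩ pmStar n e).ncard : ℝ)
          = (Nat.doubleFactorial (2*n-5) : ℝ) := by
      intro e he
      obtain ⟨hne2, he'⟩ := Finset.mem_erase.1 he
      obtain ⟨hne1, he''⟩ := Finset.mem_erase.1 he'
      obtain ⟨x, _, rfl⟩ := Finset.mem_image.1 he''
      have hxa : x ≠ a := fun h => hne1 (by rw [he₁, h])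
      have hxb : x ≠ b := fun h => hne2 (by rw [he₂, h])
      have hmxa : m.1 x ≠ a := fun h => hne1 (by
        rw [he₁, ← h, m.2.1, Sym2.eq_swap])
      have hmxb : m.1 x ≠ b := fun h => hne2 (by
        rw [he₂, ← h, m.2.1, Sym2.eq_swap])
      rw [ncard_star_inter hab (fun h => m.2.2 x h.symm) hxa hxb hmxa hmxb]
    rw [Finset.sum_congr rfl hval, Finset.sum_const,
      Finset.card_erase_of_mem h2', Finset.card_erase_of_mem h1, card_edgeF, nsmul_eq_mul]
    have : ((n - 1 - 1 : ℕ) : ℝ) = (n:ℝ) - 2 := by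
      have h' : (2:ℕ) ≤ n := by omega
      have : n - 1 - 1 = n - 2 := by omega
      rw [this]
      push_cast [h']; ring
    rw [this]

lemma key_span (hn : 3 ≤ n) {φ : PMatching n → ℝ} (hφ : φ ∈ starSpan n) (m : PMatching n) :
    (2*(n:ℝ)-3) * ∑ e ∈ edgeF m, (∑ m' : PMatching n, φ m' * Set.indicator (pmStar n e) 1 m')
      = (2*(n:ℝ)-2) * (Nat.doubleFactorial (2*n-3) : ℝ) * φ m
        + ((n:ℝ)-2) * ∑ m' : PMatching n, φ m' := by
  induction hφ using Submodule.span_induction with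
  | mem u hu =>
    obtain ⟨e, he, rfl⟩ := hu
    revert he
    induction e using Sym2.ind with
    | _ a b =>
      intro he
      have hab : a ≠ b := fun h => he (Sym2.mk_isDiag_iff.2 h)
      have h1 : ∀ e' ∈ edgeF m, (∑ m' : PMatching n,
          Set.indicator (pmStar n s(a,b)) 1 m' * Set.indicator (pmStar n e') 1 m')
            = ((pmStar n s(a,b) ∩ pmStar n e').ncard : ℝ) :=
        fun e' _ => sum_ind_mul_ind _ _
      rw [Finset.sum_congr rfl h1, sum_inter_card hn hab m,
        sum_indicator_eq_ncard, ncard_star a b hab]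
      by_cases hm : m.1 a = b
      · rw [if_pos hm, Set.indicator_of_mem ((mem_pmStar m a b).2 hm), Pi.one_apply]
        linear_combination (1-(n:ℝ)) * D3_eq hn
      · rw [if_neg hm,
          Set.indicator_of_notMem (fun h => hm ((mem_pmStar m a b).1 h))]
        linear_combination (2-(n:ℝ)) * D3_eq hn
  | zero => simp
  | add u v hu hv pu pv =>
    simp only [Pi.add_apply, add_mul, Finset.sum_add_distrib, mul_add]
    linear_combination pu + pv
  | smul r u hu pu =>
    simp only [Pi.smul_apply, smul_eq_mul, mul_assoc, ← Finset.mul_sum]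
    linear_combination r * pu

lemma one_mem_starSpan (hn : 3 ≤ n) : (fun _ : PMatching n => (1:ℝ)) ∈ starSpan n := by
  have hmem : (∑ e ∈ pmEdges n, Set.indicator (pmStar n e) (1 : PMatching n → ℝ))
      ∈ starSpan n :=
    Submodule.sum_mem _ (fun e he => Submodule.subset_span
      ⟨e, (Finset.mem_filter.1 he).2, rfl⟩)
  have hn0 : (n:ℝ) ≠ 0 := by
    have : 0 < n := by omega
    exact_mod_cast this.ne'
  have h1 : (fun _ : PMatching n => (1:ℝ))
      = (n : ℝ)⁻¹ • (∑ e ∈ pmEdges n, Set.indicator (pmStar n e) (1 : PMatching n → ℝ)) := by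
    funext m
    rw [Pi.smul_apply, Finset.sum_apply]
    have h3 := sum_star_indicator m (fun _ => (1:ℝ))
    simp only [one_mul] at h3
    rw [h3, Finset.sum_const, card_edgeF, nsmul_eq_mul, mul_one, smul_eq_mul,
      inv_mul_cancel₀ hn0]
  rw [h1]
  exact Submodule.smul_mem _ _ hmem

lemma proj_eq {A : Set (PMatching n)} {f₁ : PMatching n → ℝ}
    (hproj : ∀ u ∈ starSpan n, pmInner n (Set.indicator A 1 - f₁) u = 0)
    {u : PMatching n → ℝ} (hu : u ∈ starSpan n) :
    ∑ m' : PMatching n, Set.indicator A 1 m' * u m'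
      = ∑ m' : PMatching n, f₁ m' * u m' := by
  have h := hproj u hu
  rw [pmInner, mul_eq_zero] at h
  have hD1 : (Nat.doubleFactorial (2*n-1) : ℝ) ≠ 0 :=
    Nat.cast_ne_zero.2 (Nat.doubleFactorial_pos _).ne'
  rcases h with h | h
  · exact absurd h (by simp [hD1])
  · have h2 : ∀ m' : PMatching n, (Set.indicator A (1 : PMatching n → ℝ) - f₁) m' * u m'
        = Set.indicator A 1 m' * u m' - f₁ m' * u m' := fun m' => by
      rw [Pi.sub_apply, sub_mul]
    rw [Finset.sum_congr rfl (fun m' _ => h2 m'), Finset.sum_sub_distrib] at h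
    linarith



/-- Expressing `g` and `h` affinely in terms of `f₁ = Proj_U(1_A)`:
`g = ((2n-2)/(2n-3)) f₁ + (c(n-2)/(2n-3)) 𝟙` and
`h = ((2n-2)/(2n-3)) f₁ - (c(2n-2)/((2n-1)(2n-3))) 𝟙`. -/
theorem stmt17 (n : ℕ) (hn : 3 ≤ n) (A : Set (PMatching n)) (c : ℝ) (hc : 0 ≤ c)
    (hA : (A.ncard : ℝ) = c * (Nat.doubleFactorial (2 * n - 3) : ℝ))
    (f₁ : PMatching n → ℝ) (hf₁ : f₁ ∈ starSpan n)
    (hproj : ∀ u ∈ starSpan n, pmInner n (Set.indicator A 1 - f₁) u = 0) :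
    gFun n A =
        (fun m => (2 * (n : ℝ) - 2) / (2 * (n : ℝ) - 3) * f₁ m +
          c * ((n : ℝ) - 2) / (2 * (n : ℝ) - 3)) ∧
      hFun n A c =
        (fun m => (2 * (n : ℝ) - 2) / (2 * (n : ℝ) - 3) * f₁ m -
          c * (2 * (n : ℝ) - 2) / ((2 * (n : ℝ) - 1) * (2 * (n : ℝ) - 3))) := by
  have hn3 : (3:ℝ) ≤ (n:ℝ) := by exact_mod_cast hn
  have hD3 : (Nat.doubleFactorial (2*n-3) : ℝ) ≠ 0 :=
    Nat.cast_ne_zero.2 (Nat.doubleFactorial_pos _).ne'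
  have h2n3 : (2*(n:ℝ)-3) ≠ 0 := by
    have : (0:ℝ) < 2*(n:ℝ)-3 := by linarith
    exact this.ne'
  have h2n1 : (2*(n:ℝ)-1) ≠ 0 := by
    have : (0:ℝ) < 2*(n:ℝ)-1 := by linarith
    exact this.ne'
  have hsumA : ∑ m' : PMatching n, Set.indicator A (1 : PMatching n → ℝ) m'
      = c * (Nat.doubleFactorial (2*n-3) : ℝ) := by
    rw [sum_indicator_eq_ncard, hA]
  have hsumf : ∑ m' : PMatching n, f₁ m' = c * (Nat.doubleFactorial (2*n-3) : ℝ) := by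
    have h := proj_eq hproj (one_mem_starSpan hn)
    simp only [mul_one] at h
    rw [← h]
    exact hsumA
  have hg : ∀ m, gFun n A m
      = (2*(n:ℝ)-2)/(2*(n:ℝ)-3) * f₁ m + c*((n:ℝ)-2)/(2*(n:ℝ)-3) := by
    intro m
    show ∑ e ∈ pmEdges n, aCoe n A e * Set.indicator (pmStar n e) 1 m = _
    rw [sum_star_indicator m (aCoe n A)]
    have haCoe : ∀ e ∈ edgeF m, aCoe n A e
        = (∑ m' : PMatching n, f₁ m' * Set.indicator (pmStar n e) 1 m')
            / (Nat.doubleFactorial (2*n-3) : ℝ) := by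
      intro e he
      have hnd : ¬e.IsDiag := (Finset.mem_filter.1 (edgeF_subset m he)).2
      have h1 : ((A ∩ pmStar n e).ncard : ℝ)
          = ∑ m' : PMatching n, Set.indicator A 1 m' * Set.indicator (pmStar n e) 1 m' :=
        (sum_ind_mul_ind _ _).symm
      rw [aCoe, h1, proj_eq hproj (Submodule.subset_span ⟨e, hnd, rfl⟩)]
    rw [Finset.sum_congr rfl haCoe, ← Finset.sum_div]
    have hk := key_span hn hf₁ m
    rw [hsumf] at hk
    rw [div_eq_iff hD3]
    field_simp
    linear_combination hk
  refine ⟨funext fun m => hg m, funext fun m => ?_⟩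
  show ∑ e ∈ pmEdges n, bCoe n A c e * Set.indicator (pmStar n e) 1 m = _
  have hb : ∀ e ∈ pmEdges n, bCoe n A c e * Set.indicator (pmStar n e) 1 m
      = aCoe n A e * Set.indicator (pmStar n e) 1 m
        - (c/(2*(n:ℝ)-1)) * Set.indicator (pmStar n e) 1 m := by
    intro e _
    rw [bCoe, sub_mul]
  rw [Finset.sum_congr rfl hb, Finset.sum_sub_distrib]
  have h1 : ∑ e ∈ pmEdges n, aCoe n A e * Set.indicator (pmStar n e) 1 m = gFun n A m := rfl
  rw [h1, hg m, sum_star_indicator m (fun _ => c/(2*(n:ℝ)-1)), Finset.sum_const,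
    card_edgeF, nsmul_eq_mul]
  field_simp
  ring


end
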